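/- (Carleman inequality for the Laplacian in ℝ^d.) Let d ≥ 1. There exists a constant c > 0 depending only on d such that for all α > 0, R > 0, and every g ∈ H²(ℝ^d) with compact support contained in the set {x ∈ ℝ^d : |x/R + 3e₁|² ≥ 1}, one has (α^{3/2}/R²) ‖e^{α|x/R + 3e₁|²} g‖_{L²(ℝ^d)} + (α^{1/2}/R) ‖e^{α|x/R + 3e₁|²} ∇g‖_{L²(ℝ^d)} ≤ c ‖e^{α|x/R + 3e₁|²} Δg‖_{L²(ℝ^d)}. -/

import Mathlib

open MeasureTheory

/-- The Laplacian `Δg = Σ_k ∂²g/∂x_k²` of a function on `ℝ^d`. -/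
noncomputable def lapR {d : ℕ} (g : EuclideanSpace ℝ (Fin d) → ℂ)
    (x : EuclideanSpace ℝ (Fin d)) : ℂ :=
  ∑ k, fderiv ℝ (fun y => fderiv ℝ g y (EuclideanSpace.single k 1)) x
    (EuclideanSpace.single k 1)

set_option maxHeartbeats 1000000

namespace CL

variable {n : ℕ}

noncomputable def ek (n : ℕ) (k : Fin n) : EuclideanSpace ℝ (Fin n) :=
  EuclideanSpace.single k 1

noncomputable def wf (R : ℝ) (c : EuclideanSpace ℝ (Fin n)) (x : EuclideanSpace ℝ (Fin n)) :
    EuclideanSpace ℝ (Fin n) := R⁻¹ • x + c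

noncomputable def phi (α R : ℝ) (c : EuclideanSpace ℝ (Fin n)) (x : EuclideanSpace ℝ (Fin n)) :
    ℝ := α * ‖R⁻¹ • x + c‖ ^ 2

noncomputable def B (α R : ℝ) (c : EuclideanSpace ℝ (Fin n)) (k : Fin n)
    (x : EuclideanSpace ℝ (Fin n)) : ℝ := (2*α/R) * (wf R c x) k

/-- generic Laplacian, matching `lapR` definitionally. -/
noncomputable def lap {F : Type*} [NormedAddCommGroup F] [NormedSpace ℝ F]
    (f : EuclideanSpace ℝ (Fin n) → F) (x : EuclideanSpace ℝ (Fin n)) : F :=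
  ∑ k, fderiv ℝ (fun y => fderiv ℝ f y (ek n k)) x (ek n k)

noncomputable def Dk {F : Type*} [NormedAddCommGroup F] [NormedSpace ℝ F]
    (f : EuclideanSpace ℝ (Fin n) → F) (k : Fin n) (x : EuclideanSpace ℝ (Fin n)) : F :=
  fderiv ℝ f x (ek n k)

lemma lap_eq {F : Type*} [NormedAddCommGroup F] [NormedSpace ℝ F]
    (f : EuclideanSpace ℝ (Fin n) → F) (x) : lap f x = ∑ k, Dk (Dk f k) k x := rfl

lemma hasFDerivAt_wf (R : ℝ) (c x : EuclideanSpace ℝ (Fin n)) :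
    HasFDerivAt (wf R c) (R⁻¹ • ContinuousLinearMap.id ℝ (EuclideanSpace ℝ (Fin n))) x :=
  ((hasFDerivAt_id x).const_smul R⁻¹).add_const c

lemma phi_eq_inner (α R : ℝ) (c : EuclideanSpace ℝ (Fin n)) :
    phi α R c = fun x => α * (inner ℝ (wf R c x) (wf R c x) : ℝ) := by
  funext x
  rw [show (inner ℝ (wf R c x) (wf R c x) : ℝ) = ‖wf R c x‖ ^ 2 from real_inner_self_eq_norm_sq _]
  rfl

lemma hasFDerivAt_phi (α R : ℝ) (c x : EuclideanSpace ℝ (Fin n)) :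
    HasFDerivAt (phi α R c) ((2*α/R) • innerSL ℝ (wf R c x)) x := by
  rw [phi_eq_inner]
  have h1 := ((hasFDerivAt_wf R c x).inner ℝ (hasFDerivAt_wf R c x)).const_mul α
  refine h1.congr_fderiv ?_
  ext y
  simp [fderivInnerCLM_apply, real_inner_smul_right, smul_smul, real_inner_comm]
  ring

lemma phi_deriv_apply (α R : ℝ) (c x : EuclideanSpace ℝ (Fin n)) (k : Fin n) :
    ((2*α/R) • innerSL ℝ (wf R c x)) (ek n k) = B α R c k x := by
  simp [B, ek, EuclideanSpace.inner_single_right]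

lemma B_eq (α R : ℝ) (c : EuclideanSpace ℝ (Fin n)) (k : Fin n) :
    B α R c k = fun x => (2*α/(R*R)) * (inner ℝ (ek n k) x : ℝ) + (2*α/R) * c k := by
  funext x
  simp [B, wf, ek, EuclideanSpace.inner_single_left, PiLp.add_apply, PiLp.smul_apply,
    smul_eq_mul]
  ring

lemma hasFDerivAt_B (α R : ℝ) (c : EuclideanSpace ℝ (Fin n)) (k : Fin n)
    (x : EuclideanSpace ℝ (Fin n)) :
    HasFDerivAt (B α R c k) ((2*α/(R*R)) • innerSL ℝ (ek n k)) x := by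
  rw [B_eq]
  exact ((innerSL ℝ (ek n k)).hasFDerivAt.const_mul _).add_const _

lemma B_deriv_apply (α R : ℝ) (k j : Fin n) :
    ((2*α/(R*R)) • innerSL ℝ (ek n k)) (ek n j) = if k = j then 2*α/(R*R) else 0 := by
  simp [ek, EuclideanSpace.inner_single_left, EuclideanSpace.single_apply]

lemma contDiff_B (α R : ℝ) (c : EuclideanSpace ℝ (Fin n)) (k : Fin n) :
    ContDiff ℝ 2 (B α R c k) := by
  rw [B_eq]
  exact (contDiff_const.mul ((innerSL ℝ (ek n k)).contDiff)).add contDiff_const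

lemma contDiff_phi (α R : ℝ) (c : EuclideanSpace ℝ (Fin n)) :
    ContDiff ℝ 2 (phi α R c) := by
  rw [phi_eq_inner]
  have hw : ContDiff ℝ 2 (wf (n := n) R c) :=
    (contDiff_id.const_smul R⁻¹).add contDiff_const
  exact (hw.inner ℝ hw).const_smul α

lemma contDiff_expphi (α R : ℝ) (c : EuclideanSpace ℝ (Fin n)) :
    ContDiff ℝ 2 (fun x => Real.exp (phi α R c x)) :=
  (Real.contDiff_exp.of_le le_top).comp (contDiff_phi α R c)

section Helpers

variable {n : ℕ} {F : Type*} [NormedAddCommGroup F] [NormedSpace ℝ F]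

lemma contDiff_Dk {f : EuclideanSpace ℝ (Fin n) → F} (hf : ContDiff ℝ 2 f) (k : Fin n) :
    ContDiff ℝ 1 (Dk f k) :=
  (hf.fderiv_right (by norm_num)).clm_apply contDiff_const

lemma continuous_Dk {f : EuclideanSpace ℝ (Fin n) → F} (hf : ContDiff ℝ 1 f) (k : Fin n) :
    Continuous (Dk f k) :=
  (((hf.fderiv_right (m := 0) (by norm_num)).clm_apply contDiff_const).continuous :
    Continuous fun x => fderiv ℝ f x (ek n k))

lemma hcs_Dk {f : EuclideanSpace ℝ (Fin n) → F} (h : HasCompactSupport f) (k : Fin n) :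
    HasCompactSupport (Dk f k) :=
  (h.fderiv ℝ).comp_left (g := fun T : EuclideanSpace ℝ (Fin n) →L[ℝ] F => T (ek n k)) rfl

lemma integ {f g : EuclideanSpace ℝ (Fin n) → ℝ} (hf : Continuous f) (hg : Continuous g)
    (h : HasCompactSupport g) : Integrable (fun x => f x * g x) volume :=
  (hf.mul hg).integrable_of_hasCompactSupport h.mul_left

lemma ibp {f g : EuclideanSpace ℝ (Fin n) → ℝ} (hf : ContDiff ℝ 1 f) (hg : ContDiff ℝ 1 g)
    (h : HasCompactSupport g) (k : Fin n) :
    ∫ x, f x * Dk g k x = - ∫ x, Dk f k x * g x := by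
  have h1 : Integrable (fun x => Dk f k x * g x) volume :=
    ((continuous_Dk hf k).mul hg.continuous).integrable_of_hasCompactSupport h.mul_left
  have h2 : Integrable (fun x => f x * Dk g k x) volume :=
    integ hf.continuous (continuous_Dk hg k) (hcs_Dk h k)
  have h3 : Integrable (fun x => f x * g x) volume := integ hf.continuous hg.continuous h
  exact integral_mul_fderiv_eq_neg_fderiv_mul_of_integrable h1 h2 h3
    (fun x _ => hf.differentiable one_ne_zero x) (fun x _ => hg.differentiable one_ne_zero x)

lemma Dk_of_hasFDerivAt {f : EuclideanSpace ℝ (Fin n) → ℝ}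
    {L : EuclideanSpace ℝ (Fin n) →L[ℝ] ℝ} {x} (h : HasFDerivAt f L x) (k : Fin n) :
    Dk f k x = L (ek n k) := by rw [Dk, h.fderiv]

lemma Dk_mul {f g : EuclideanSpace ℝ (Fin n) → ℝ} {x} (hf : DifferentiableAt ℝ f x)
    (hg : DifferentiableAt ℝ g x) (k : Fin n) :
    Dk (fun y => f y * g y) k x = f x * Dk g k x + g x * Dk f k x := by
  unfold Dk
  rw [fderiv_fun_mul hf hg]
  simp

lemma Dk_add {f g : EuclideanSpace ℝ (Fin n) → ℝ} {x} (hf : DifferentiableAt ℝ f x)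
    (hg : DifferentiableAt ℝ g x) (k : Fin n) :
    Dk (fun y => f y + g y) k x = Dk f k x + Dk g k x := by
  unfold Dk
  rw [fderiv_fun_add hf hg]
  simp

lemma schwarz {f : EuclideanSpace ℝ (Fin n) → ℝ} (hf : ContDiff ℝ 2 f) (x) (j k : Fin n) :
    Dk (Dk f j) k x = Dk (Dk f k) j x := by
  have hdf : ∀ y, HasFDerivAt f (fderiv ℝ f y) y :=
    fun y => (hf.differentiable two_ne_zero y).hasFDerivAt
  have hd2 : DifferentiableAt ℝ (fderiv ℝ f) x :=
    ((hf.fderiv_right (by norm_num)).differentiable one_ne_zero) x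
  have key : ∀ (i l : Fin n),
      Dk (Dk f i) l x = (fderiv ℝ (fderiv ℝ f) x) (ek n l) (ek n i) := by
    intro i l
    have hc := ((ContinuousLinearMap.apply ℝ ℝ (ek n i)).hasFDerivAt
      (x := fderiv ℝ f x)).comp x hd2.hasFDerivAt
    have heq : Dk f i = ⇑(ContinuousLinearMap.apply ℝ ℝ (ek n i)) ∘ (fderiv ℝ f) := rfl
    rw [Dk, heq, hc.fderiv]
    rfl
  rw [key j k, key k j]
  exact second_derivative_symmetric hdf hd2.hasFDerivAt _ _

lemma Dk_B (α R : ℝ) (c : EuclideanSpace ℝ (Fin n)) (k j : Fin n) (x) :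
    Dk (B α R c k) j x = if k = j then 2*α/(R*R) else 0 := by
  rw [Dk_of_hasFDerivAt (hasFDerivAt_B α R c k x) j, B_deriv_apply]

lemma Dk_phi (α R : ℝ) (c : EuclideanSpace ℝ (Fin n)) (k : Fin n) (x) :
    Dk (phi α R c) k x = B α R c k x := by
  rw [Dk_of_hasFDerivAt (hasFDerivAt_phi α R c x) k, phi_deriv_apply]

lemma Dk_expphi (α R : ℝ) (c : EuclideanSpace ℝ (Fin n)) (k : Fin n) (x) :
    Dk (fun y => Real.exp (phi α R c y)) k x = B α R c k x * Real.exp (phi α R c x) := by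
  rw [Dk_of_hasFDerivAt ((hasFDerivAt_phi α R c x).exp) k, ContinuousLinearMap.smul_apply,
    phi_deriv_apply, smul_eq_mul]
  ring

end Helpers

section More

variable {n : ℕ}

lemma hcs_zero : HasCompactSupport (fun _ : EuclideanSpace ℝ (Fin n) => (0:ℝ)) := by
  simp [HasCompactSupport, tsupport, Function.support]

lemma hcs_sum {ι : Type*} (s : Finset ι) (f : ι → EuclideanSpace ℝ (Fin n) → ℝ)
    (h : ∀ i ∈ s, HasCompactSupport (f i)) :
    HasCompactSupport (fun x => ∑ i ∈ s, f i x) := by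
  classical
  induction s using Finset.induction with
  | empty => simpa using hcs_zero
  | insert a s hnot ih =>
      simp only [Finset.sum_insert hnot]
      exact (h a (Finset.mem_insert_self a s)).add
        (ih fun i hi => h i (Finset.mem_insert_of_mem hi))

lemma Dk_sum {ι : Type*} (s : Finset ι) {f : ι → EuclideanSpace ℝ (Fin n) → ℝ} {x}
    (h : ∀ i ∈ s, DifferentiableAt ℝ (f i) x) (k : Fin n) :
    Dk (fun y => ∑ i ∈ s, f i y) k x = ∑ i ∈ s, Dk (f i) k x := by
  unfold Dk
  rw [fderiv_fun_sum h]
  simp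

lemma Dk_clm {F G : Type*} [NormedAddCommGroup F] [NormedSpace ℝ F] [NormedAddCommGroup G]
    [NormedSpace ℝ G] (T : F →L[ℝ] G) {g : EuclideanSpace ℝ (Fin n) → F} {x}
    (hg : DifferentiableAt ℝ g x) (k : Fin n) :
    Dk (fun y => T (g y)) k x = T (Dk g k x) := by
  unfold Dk
  have hc := (T.hasFDerivAt (x := g x)).comp x hg.hasFDerivAt
  have heq : (fun y => T (g y)) = ⇑T ∘ g := rfl
  rw [heq, hc.fderiv]
  rfl

lemma lap_clm {F G : Type*} [NormedAddCommGroup F] [NormedSpace ℝ F] [NormedAddCommGroup G]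
    [NormedSpace ℝ G] (T : F →L[ℝ] G) {g : EuclideanSpace ℝ (Fin n) → F}
    (hg : ContDiff ℝ 2 g) (x) :
    lap (fun y => T (g y)) x = T (lap g x) := by
  rw [lap, lap, map_sum]
  refine Finset.sum_congr rfl fun k _ => ?_
  have h1 : (fun y => fderiv ℝ (fun z => T (g z)) y (ek n k))
      = fun y => T (fderiv ℝ g y (ek n k)) :=
    funext fun y => Dk_clm T (hg.differentiable two_ne_zero y) k
  rw [h1]
  exact Dk_clm T (((contDiff_Dk hg k).differentiable one_ne_zero) x) k

lemma continuous_lap {F : Type*} [NormedAddCommGroup F] [NormedSpace ℝ F]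
    {f : EuclideanSpace ℝ (Fin n) → F} (hf : ContDiff ℝ 2 f) : Continuous (lap f) := by
  unfold lap
  exact continuous_finset_sum _ fun k _ => continuous_Dk (contDiff_Dk hf k) k

lemma hcs_lap {f : EuclideanSpace ℝ (Fin n) → ℝ} (h : HasCompactSupport f) :
    HasCompactSupport (lap f) :=
  hcs_sum Finset.univ (fun k => Dk (Dk f k) k) (fun k _ => hcs_Dk (hcs_Dk h k) k)

lemma opnorm_sq_le {F : Type*} [NormedAddCommGroup F] [NormedSpace ℝ F]
    (T : EuclideanSpace ℝ (Fin n) →L[ℝ] F) : ‖T‖^2 ≤ ∑ k, ‖T (ek n k)‖^2 := by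
  have hb : ‖T‖ ≤ Real.sqrt (∑ k, ‖T (ek n k)‖^2) := by
    refine T.opNorm_le_bound (Real.sqrt_nonneg _) fun y => ?_
    have hy : y = ∑ k, y k • ek n k := by
      have h := (EuclideanSpace.basisFun (Fin n) ℝ).sum_repr y
      simp only [EuclideanSpace.basisFun_repr, EuclideanSpace.basisFun_apply] at h
      exact h.symm
    calc ‖T y‖ = ‖∑ k, y k • T (ek n k)‖ := by
          conv_lhs => rw [hy]
          rw [map_sum]
          simp
      _ ≤ ∑ k, ‖y k • T (ek n k)‖ := norm_sum_le _ _
      _ = ∑ k, |y k| * ‖T (ek n k)‖ := by simp [norm_smul]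
      _ ≤ Real.sqrt (∑ k, (y k)^2) * Real.sqrt (∑ k, ‖T (ek n k)‖^2) := by
          have := Finset.sum_mul_sq_le_sq_mul_sq Finset.univ (fun k => |y k|)
            (fun k => ‖T (ek n k)‖)
          have h2 : (∑ k, |y k| * ‖T (ek n k)‖) ^ 2
              ≤ (∑ k, (y k)^2) * ∑ k, ‖T (ek n k)‖^2 := by
            simpa [sq_abs] using this
          have h3 : 0 ≤ ∑ k, |y k| * ‖T (ek n k)‖ :=
            Finset.sum_nonneg fun k _ => mul_nonneg (abs_nonneg _) (norm_nonneg _)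
          calc (∑ k, |y k| * ‖T (ek n k)‖)
              = Real.sqrt ((∑ k, |y k| * ‖T (ek n k)‖)^2) := (Real.sqrt_sq h3).symm
            _ ≤ Real.sqrt ((∑ k, (y k)^2) * ∑ k, ‖T (ek n k)‖^2) := Real.sqrt_le_sqrt h2
            _ = _ := Real.sqrt_mul (Finset.sum_nonneg fun k _ => sq_nonneg _) _
      _ = Real.sqrt (∑ k, ‖T (ek n k)‖^2) * ‖y‖ := by
          rw [EuclideanSpace.norm_eq]
          simp [sq_abs]
          ring
  calc ‖T‖^2 ≤ (Real.sqrt (∑ k, ‖T (ek n k)‖^2))^2 := by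
        have := pow_le_pow_left₀ (norm_nonneg T) hb 2
        simpa using this
    _ = ∑ k, ‖T (ek n k)‖^2 :=
        Real.sq_sqrt (Finset.sum_nonneg fun k _ => sq_nonneg _)

end More

section VE

variable {n : ℕ}

noncomputable def vE (α R : ℝ) (c : EuclideanSpace ℝ (Fin n))
    (u : EuclideanSpace ℝ (Fin n) → ℝ) (x : EuclideanSpace ℝ (Fin n)) : ℝ :=
  Real.exp (phi α R c x) * u x

variable (α R : ℝ) (c : EuclideanSpace ℝ (Fin n)) {u : EuclideanSpace ℝ (Fin n) → ℝ}

lemma contDiff_vE (hu : ContDiff ℝ 2 u) : ContDiff ℝ 2 (vE α R c u) :=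
  (contDiff_expphi α R c).mul hu

lemma hcs_vE (hcs : HasCompactSupport u) : HasCompactSupport (vE α R c u) :=
  hcs.mul_left

lemma Dk_vE (hu : ContDiff ℝ 2 u) (k : Fin n) (x) :
    Dk (vE α R c u) k x
      = B α R c k x * vE α R c u x + Real.exp (phi α R c x) * Dk u k x := by
  have h := Dk_mul (x := x) (((contDiff_expphi α R c).differentiable two_ne_zero) x)
    ((hu.differentiable two_ne_zero) x) k
  have h2 : Dk (vE α R c u) k x = Dk (fun y => Real.exp (phi α R c y) * u y) k x := rfl
  rw [h2, h, Dk_expphi]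
  unfold vE
  ring

lemma Dk_Dk_vE (hu : ContDiff ℝ 2 u) (k : Fin n) (x) :
    Dk (Dk (vE α R c u) k) k x
      = (2*α/(R*R)) * vE α R c u x + 2 * (B α R c k x * Dk (vE α R c u) k x)
        - (B α R c k x)^2 * vE α R c u x
        + Real.exp (phi α R c x) * Dk (Dk u k) k x := by
  have hfun : Dk (vE α R c u) k
      = fun y => B α R c k y * vE α R c u y + Real.exp (phi α R c y) * Dk u k y :=
    funext fun y => Dk_vE α R c hu k y
  have dB : DifferentiableAt ℝ (B α R c k) x := ((contDiff_B α R c k).differentiable two_ne_zero) x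
  have dv : DifferentiableAt ℝ (vE α R c u) x :=
    ((contDiff_vE α R c hu).differentiable two_ne_zero) x
  have de : DifferentiableAt ℝ (fun y => Real.exp (phi α R c y)) x :=
    ((contDiff_expphi α R c).differentiable two_ne_zero) x
  have du : DifferentiableAt ℝ (Dk u k) x := ((contDiff_Dk hu k).differentiable one_ne_zero) x
  have e1 : Dk (Dk (vE α R c u) k) k x
      = Dk (fun y => B α R c k y * vE α R c u y) k x
        + Dk (fun y => Real.exp (phi α R c y) * Dk u k y) k x := by
    rw [hfun]
    exact Dk_add (dB.mul dv) (de.mul du) k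
  have e2 : Dk (fun y => B α R c k y * vE α R c u y) k x
      = B α R c k x * Dk (vE α R c u) k x + vE α R c u x * Dk (B α R c k) k x :=
    Dk_mul dB dv k
  have e3 : Dk (fun y => Real.exp (phi α R c y) * Dk u k y) k x
      = Real.exp (phi α R c x) * Dk (Dk u k) k x
        + Dk u k x * Dk (fun y => Real.exp (phi α R c y)) k x :=
    Dk_mul de du k
  have e4 := Dk_vE α R c hu k x
  rw [e1, e2, e3, Dk_B, Dk_expphi, if_pos rfl]
  linear_combination (-(B α R c k x)) * e4

lemma lap_vE (hu : ContDiff ℝ 2 u) (x) :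
    lap (vE α R c u) x
      = (2*α/(R*R)) * (n:ℝ) * vE α R c u x
        + 2 * (∑ k, B α R c k x * Dk (vE α R c u) k x)
        - (∑ k, (B α R c k x)^2) * vE α R c u x
        + Real.exp (phi α R c x) * lap u x := by
  rw [lap_eq]
  rw [Finset.sum_congr rfl fun k _ => Dk_Dk_vE α R c hu k x]
  rw [show (lap u x) = ∑ k, Dk (Dk u k) k x from rfl]
  simp only [Finset.sum_add_distrib, Finset.sum_sub_distrib, Finset.sum_const,
    Finset.card_univ, Fintype.card_fin, nsmul_eq_mul, Finset.mul_sum, Finset.sum_mul]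
  ring

end VE

section MainReal

variable {n : ℕ}

lemma main_real (α R : ℝ) (hα : 0 < α) (hR : 0 < R) (c : EuclideanSpace ℝ (Fin n))
    (u : EuclideanSpace ℝ (Fin n) → ℝ) (hu : ContDiff ℝ 2 u) (hcs : HasCompactSupport u)
    (hloc : ∀ x, u x ≠ 0 → 1 ≤ ‖R⁻¹ • x + c‖ ^ 2) :
    α^3/R^4 * (∫ x, Real.exp (phi α R c x)^2 * (u x)^2)
        ≤ (1/32) * ∫ x, Real.exp (phi α R c x)^2 * (lap u x)^2
    ∧ α/R^2 * (∫ x, Real.exp (phi α R c x)^2 * (∑ k, (Dk u k x)^2))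
        ≤ (1/2) * ∫ x, Real.exp (phi α R c x)^2 * (lap u x)^2 := by
  classical
  set v := vE α R c u with hvdef
  have hv2 : ContDiff ℝ 2 v := contDiff_vE α R c hu
  have hvcs : HasCompactSupport v := hcs_vE α R c hcs
  have hvc : Continuous v := hv2.continuous
  have hB1 : ∀ k : Fin n, ContDiff ℝ 1 (B α R c k) :=
    fun k => (contDiff_B α R c k).of_le one_le_two
  have hBc : ∀ k, Continuous (B α R c k) := fun k => (hB1 k).continuous
  have hV1 : ∀ k, ContDiff ℝ 1 (Dk v k) := fun k => contDiff_Dk hv2 k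
  have hVc : ∀ k, Continuous (Dk v k) := fun k => (hV1 k).continuous
  have hVcs : ∀ k, HasCompactSupport (Dk v k) := fun k => hcs_Dk hvcs k
  have hVVc : ∀ j k : Fin n, Continuous (Dk (Dk v j) k) := fun j k => continuous_Dk (hV1 j) k
  have hlapvc : Continuous (lap v) := continuous_lap hv2
  have hlapvcs : HasCompactSupport (lap v) := hcs_lap hvcs
  have hlapuc : Continuous (lap u) := continuous_lap hu
  have hlapucs : HasCompactSupport (lap u) := hcs_lap hcs
  have hec : Continuous (fun x => Real.exp (phi α R c x)) := (contDiff_expphi α R c).continuous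
  set Q : EuclideanSpace ℝ (Fin n) → ℝ := fun x => ∑ j, (B α R c j x)^2 with hQdef
  have hQ1 : ContDiff ℝ 1 Q := ContDiff.sum fun j _ => (hB1 j).pow 2
  have hQc : Continuous Q := hQ1.continuous
  have hDkQ : ∀ (k : Fin n) x, Dk Q k x = (4*α/(R*R)) * B α R c k x := by
    intro k x
    have hdiff : ∀ j ∈ Finset.univ (α := Fin n),
        DifferentiableAt ℝ (fun y => B α R c j y * B α R c j y) x :=
      fun j _ => (((hB1 j).differentiable one_ne_zero) x).mul (((hB1 j).differentiable one_ne_zero) x)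
    have hQeq : Q = fun y => ∑ j, B α R c j y * B α R c j y := by
      funext y; simp [hQdef, sq]
    rw [hQeq, Dk_sum Finset.univ hdiff k]
    have h2 : ∀ j : Fin n, Dk (fun y => B α R c j y * B α R c j y) k x
        = B α R c j x * (if j = k then 2*α/(R*R) else 0)
          + B α R c j x * (if j = k then 2*α/(R*R) else 0) := by
      intro j
      rw [Dk_mul (((hB1 j).differentiable one_ne_zero) x) (((hB1 j).differentiable one_ne_zero) x) k,
        Dk_B]
    rw [Finset.sum_congr rfl fun j _ => h2 j]
    simp [mul_ite, mul_zero, Finset.sum_add_distrib, Finset.sum_ite_eq']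
    ring
  have hwfc : Continuous (wf R c) := by
    unfold wf
    exact (continuous_id.const_smul R⁻¹).add continuous_const
  have hQw : ∀ x, Q x = (4*α^2/(R*R)) * ‖wf R c x‖^2 := by
    intro x
    have hn : ‖wf R c x‖^2 = ∑ j, (wf R c x j)^2 := by
      rw [EuclideanSpace.norm_eq, Real.sq_sqrt (Finset.sum_nonneg fun j _ => sq_nonneg _)]
      simp [sq_abs]
    simp only [hQdef]
    rw [hn, Finset.mul_sum]
    refine Finset.sum_congr rfl fun j _ => ?_
    simp only [B]
    ring
  set Gt := ∑ k : Fin n, ∫ x, Dk v k x * Dk v k x with hGt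
  set QV := ∫ x, Q x * (v x * v x) with hQV
  set W := ∫ x, ‖wf R c x‖^2 * (v x * v x) with hW
  set Jv := ∫ x, Real.exp (phi α R c x)^2 * (lap u x)^2 with hJv
  have hGk_nonneg : ∀ k : Fin n, 0 ≤ ∫ x, Dk v k x * Dk v k x :=
    fun k => integral_nonneg fun x => mul_self_nonneg _
  have hGt_nonneg : 0 ≤ Gt := Finset.sum_nonneg fun k _ => hGk_nonneg k
  have hW_nonneg : 0 ≤ W :=
    integral_nonneg fun x => mul_nonneg (sq_nonneg _) (mul_self_nonneg _)
  have hQV_eq : QV = (4*α^2/(R*R)) * W := by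
    rw [hQV, hW, ← integral_const_mul]
    congr 1
    funext x
    rw [hQw x]
    ring
  -- C1 : ∫ v Δv = -Gt
  have hC1 : ∫ x, v x * lap v x = -Gt := by
    have h1 : (fun x => v x * lap v x) = fun x => ∑ k, v x * Dk (Dk v k) k x := by
      funext x; rw [lap_eq, Finset.mul_sum]
    rw [h1, integral_finset_sum _ (fun k _ => integ hvc (hVVc k k) (hcs_Dk (hVcs k) k)), hGt,
      ← Finset.sum_neg_distrib]
    exact Finset.sum_congr rfl fun k _ => by
      rw [ibp (hv2.of_le one_le_two) (hV1 k) (hVcs k) k]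
  -- IBP of B against squares of first derivatives
  have hIsq : ∀ k j : Fin n, ∫ x, B α R c k x * Dk (fun y => Dk v j y * Dk v j y) k x
      = -((2*α/(R*R)) * ∫ x, Dk v j x * Dk v j x) := by
    intro k j
    rw [ibp (hB1 k) ((hV1 j).mul (hV1 j)) ((hVcs j).mul_left) k]
    have h2 : (fun x => Dk (B α R c k) k x * (Dk v j x * Dk v j x))
        = fun x => (2*α/(R*R)) * (Dk v j x * Dk v j x) := by
      funext x; rw [Dk_B, if_pos rfl]
    rw [h2, integral_const_mul]
  have hstep : ∀ k j : Fin n, ∫ x, (B α R c k x * Dk v k x) * Dk (Dk v j) j x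
      = (if k = j then -((2*α/(R*R)) * ∫ x, Dk v k x * Dk v k x) else 0)
        + (α/(R*R)) * ∫ x, Dk v j x * Dk v j x := by
    intro k j
    rw [ibp ((hB1 k).mul (hV1 k)) (hV1 j) (hVcs j) j]
    have hfe : (fun x => Dk (fun y => B α R c k y * Dk v k y) j x * Dk v j x)
        = fun x => (if k = j then 2*α/(R*R) else 0) * (Dk v k x * Dk v j x)
            + B α R c k x * Dk (Dk v j) k x * Dk v j x := by
      funext x
      rw [Dk_mul (((hB1 k).differentiable one_ne_zero) x) (((hV1 k).differentiable one_ne_zero) x) j,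
        Dk_B, ← schwarz hv2 x j k]
      ring
    have i1 : Integrable (fun x => (if k = j then 2*α/(R*R) else 0) * (Dk v k x * Dk v j x))
        volume := (integ (hVc k) (hVc j) (hVcs j)).const_mul _
    have i2 : Integrable (fun x => B α R c k x * Dk (Dk v j) k x * Dk v j x) volume :=
      integ ((hBc k).mul (hVVc j k)) (hVc j) (hVcs j)
    rw [hfe, integral_add i1 i2, integral_const_mul]
    have hmix : ∫ x, B α R c k x * Dk (Dk v j) k x * Dk v j x
        = (1/2) * ∫ x, B α R c k x * Dk (fun y => Dk v j y * Dk v j y) k x := by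
      rw [← integral_const_mul]
      congr 1
      funext x
      rw [Dk_mul (((hV1 j).differentiable one_ne_zero) x) (((hV1 j).differentiable one_ne_zero) x) k]
      ring
    rw [hmix, hIsq k j]
    by_cases h : k = j
    · subst h
      simp only [eq_self_iff_true, if_true]
      ring
    · simp only [if_neg h]
      ring
  -- T1
  have hT1 : ∑ k : Fin n, ∫ x, (B α R c k x * Dk v k x) * lap v x
      = (α*(n:ℝ)/(R*R)) * Gt - (2*α/(R*R)) * Gt := by
    have h1 : ∀ k : Fin n, ∫ x, (B α R c k x * Dk v k x) * lap v x
        = ∑ j, ∫ x, (B α R c k x * Dk v k x) * Dk (Dk v j) j x := by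
      intro k
      have h2 : (fun x => (B α R c k x * Dk v k x) * lap v x)
          = fun x => ∑ j, (B α R c k x * Dk v k x) * Dk (Dk v j) j x := by
        funext x; rw [lap_eq, Finset.mul_sum]
      rw [h2, integral_finset_sum (f := fun j x => (B α R c k x * Dk v k x) * Dk (Dk v j) j x) _
        (fun j _ => integ ((hBc k).mul (hVc k)) (hVVc j j) (hcs_Dk (hVcs j) j))]
    calc ∑ k : Fin n, ∫ x, (B α R c k x * Dk v k x) * lap v x
        = ∑ k : Fin n, ∑ j : Fin n,
            ((if k = j then -((2*α/(R*R)) * ∫ x, Dk v k x * Dk v k x) else 0)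
              + (α/(R*R)) * ∫ x, Dk v j x * Dk v j x) := by
          refine Finset.sum_congr rfl fun k _ => ?_
          rw [h1 k]
          exact Finset.sum_congr rfl fun j _ => hstep k j
      _ = ∑ k : Fin n, (-((2*α/(R*R)) * ∫ x, Dk v k x * Dk v k x) + (α/(R*R)) * Gt) := by
          refine Finset.sum_congr rfl fun k _ => ?_
          rw [Finset.sum_add_distrib, Finset.sum_ite_eq, if_pos (Finset.mem_univ k),
            ← Finset.mul_sum, ← hGt]
      _ = (α*(n:ℝ)/(R*R)) * Gt - (2*α/(R*R)) * Gt := by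
          rw [Finset.sum_add_distrib, Finset.sum_neg_distrib, ← Finset.mul_sum, ← hGt,
            Finset.sum_const, Finset.card_univ, Fintype.card_fin, nsmul_eq_mul]
          ring
  -- T3
  have hT3 : ∑ k : Fin n, ∫ x, (Q x * B α R c k x) * (v x * Dk v k x)
      = -(α*(n:ℝ)/(R*R) + 2*α/(R*R)) * QV := by
    have h1 : ∀ k : Fin n, ∫ x, (Q x * B α R c k x) * (v x * Dk v k x)
        = (1/2) * ∫ x, (Q x * B α R c k x) * Dk (fun y => v y * v y) k x := by
      intro k
      rw [← integral_const_mul]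
      congr 1
      funext x
      rw [Dk_mul ((hv2.differentiable two_ne_zero) x) ((hv2.differentiable two_ne_zero) x) k]
      ring
    have h2 : ∀ k : Fin n, ∫ x, (Q x * B α R c k x) * Dk (fun y => v y * v y) k x
        = -∫ x, Dk (fun y => Q y * B α R c k y) k x * (v x * v x) :=
      fun k => ibp (hQ1.mul (hB1 k)) ((hv2.of_le one_le_two).mul (hv2.of_le one_le_two))
        hvcs.mul_left k
    have h3 : ∀ (k : Fin n) x, Dk (fun y => Q y * B α R c k y) k x
        = (2*α/(R*R)) * Q x + (4*α/(R*R)) * ((B α R c k x) * (B α R c k x)) := by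
      intro k x
      rw [Dk_mul ((hQ1.differentiable one_ne_zero) x) (((hB1 k).differentiable one_ne_zero) x) k,
        Dk_B, if_pos rfl, hDkQ]
      ring
    have iQ : Integrable (fun x => Q x * (v x * v x)) volume :=
      integ hQc (hvc.mul hvc) hvcs.mul_left
    have iB2 : ∀ k : Fin n,
        Integrable (fun x => (B α R c k x * B α R c k x) * (v x * v x)) volume :=
      fun k => integ ((hBc k).mul (hBc k)) (hvc.mul hvc) hvcs.mul_left
    have h4 : ∀ k : Fin n, ∫ x, Dk (fun y => Q y * B α R c k y) k x * (v x * v x)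
        = (2*α/(R*R)) * QV
          + (4*α/(R*R)) * ∫ x, (B α R c k x * B α R c k x) * (v x * v x) := by
      intro k
      have hfe : (fun x => Dk (fun y => Q y * B α R c k y) k x * (v x * v x))
          = fun x => (2*α/(R*R)) * (Q x * (v x * v x))
              + (4*α/(R*R)) * ((B α R c k x * B α R c k x) * (v x * v x)) := by
        funext x
        rw [h3 k x]
        ring
      rw [hfe, integral_add (iQ.const_mul _) ((iB2 k).const_mul _), integral_const_mul,
        integral_const_mul, hQV]
    have h5 : ∑ k : Fin n, ∫ x, (B α R c k x * B α R c k x) * (v x * v x) = QV := by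
      rw [← integral_finset_sum _ (fun k _ => iB2 k), hQV]
      congr 1
      funext x
      rw [← Finset.sum_mul]
      congr 1
      simp only [hQdef]
      exact Finset.sum_congr rfl fun j _ => (pow_two (B α R c j x)).symm
    calc ∑ k : Fin n, ∫ x, (Q x * B α R c k x) * (v x * Dk v k x)
        = ∑ k : Fin n, (1/2) * (-((2*α/(R*R)) * QV
            + (4*α/(R*R)) * ∫ x, (B α R c k x * B α R c k x) * (v x * v x))) := by
          refine Finset.sum_congr rfl fun k _ => ?_
          rw [h1 k, h2 k, h4 k]
      _ = (1/2) * (-((n:ℝ) * ((2*α/(R*R)) * QV) + (4*α/(R*R)) * QV)) := by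
          rw [← Finset.mul_sum]
          congr 1
          rw [Finset.sum_neg_distrib]
          congr 1
          rw [Finset.sum_add_distrib, Finset.sum_const, Finset.card_univ, Fintype.card_fin,
            nsmul_eq_mul, ← Finset.mul_sum, h5]
      _ = -(α*(n:ℝ)/(R*R) + 2*α/(R*R)) * QV := by ring
    -- S and A
  set S : EuclideanSpace ℝ (Fin n) → ℝ := fun x => lap v x + Q x * v x with hS
  set A : EuclideanSpace ℝ (Fin n) → ℝ :=
    fun x => (-2) * (∑ k, B α R c k x * Dk v k x) + (-(2*α*(n:ℝ)/(R*R))) * v x with hA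
  have hsumc : Continuous (fun x => ∑ k, B α R c k x * Dk v k x) :=
    continuous_finset_sum _ fun k _ => (hBc k).mul (hVc k)
  have hsumcs : HasCompactSupport (fun x => ∑ k, B α R c k x * Dk v k x) :=
    hcs_sum Finset.univ _ fun k _ => (hVcs k).mul_left
  have hScont : Continuous S := hlapvc.add (hQc.mul hvc)
  have hScs : HasCompactSupport S := hlapvcs.add hvcs.mul_left
  have hAcont : Continuous A := (continuous_const.mul hsumc).add (continuous_const.mul hvc)
  have hAcs : HasCompactSupport A := by
    have h1 : HasCompactSupport (fun x => (-2) * (∑ k, B α R c k x * Dk v k x)) :=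
      hsumcs.mul_left
    have h2 : HasCompactSupport (fun x => (-(2*α*(n:ℝ)/(R*R))) * v x) := hvcs.mul_left
    exact h1.add h2
  have hSA_pt : ∀ x, Real.exp (phi α R c x) * lap u x = S x + A x := by
    intro x
    have h := lap_vE α R c hu x
    rw [← hvdef] at h
    simp only [hS, hA, hQdef]
    linear_combination -h
  -- the integral of S * A
  have iT1 : Integrable (fun x => ∑ k, (B α R c k x * Dk v k x) * lap v x) volume :=
    integrable_finset_sum _ fun k _ => integ ((hBc k).mul (hVc k)) hlapvc hlapvcs
  have iT2 : Integrable (fun x => v x * lap v x) volume := integ hvc hlapvc hlapvcs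
  have iT3 : Integrable (fun x => ∑ k, (Q x * B α R c k x) * (v x * Dk v k x)) volume :=
    integrable_finset_sum _ fun k _ =>
      integ (hQc.mul (hBc k)) (hvc.mul (hVc k)) ((hVcs k).mul_left)
  have iT4 : Integrable (fun x => Q x * (v x * v x)) volume :=
    integ hQc (hvc.mul hvc) hvcs.mul_left
  have hISA : ∫ x, S x * A x = (4*α/(R*R)) * Gt + (4*α/(R*R)) * QV := by
    have hpt : (fun x => S x * A x)
        = fun x => (-2) * (∑ k, (B α R c k x * Dk v k x) * lap v x)
            + (-(2*α*(n:ℝ)/(R*R))) * (v x * lap v x)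
            + ((-2) * (∑ k, (Q x * B α R c k x) * (v x * Dk v k x))
            + (-(2*α*(n:ℝ)/(R*R))) * (Q x * (v x * v x))) := by
      funext x
      have e1 : ∑ k, (B α R c k x * Dk v k x) * lap v x
          = (∑ k, B α R c k x * Dk v k x) * lap v x := (Finset.sum_mul _ _ _).symm
      have e2 : ∑ k, (Q x * B α R c k x) * (v x * Dk v k x)
          = (Q x * v x) * ∑ k, B α R c k x * Dk v k x := by
        rw [Finset.mul_sum]
        exact Finset.sum_congr rfl fun k _ => by ring
      rw [e1, e2]
      simp only [hS, hA]
      ring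
    have iA1 : Integrable (fun x => (-2:ℝ) * ∑ k, (B α R c k x * Dk v k x) * lap v x)
        volume := iT1.const_mul _
    have iA2 : Integrable (fun x => (-(2*α*(n:ℝ)/(R*R))) * (v x * lap v x)) volume :=
      iT2.const_mul _
    have iA3 : Integrable (fun x => (-2:ℝ) * ∑ k, (Q x * B α R c k x) * (v x * Dk v k x))
        volume := iT3.const_mul _
    have iA4 : Integrable (fun x => (-(2*α*(n:ℝ)/(R*R))) * (Q x * (v x * v x))) volume :=
      iT4.const_mul _
    have iA12 : Integrable (fun x => (-2:ℝ) * (∑ k, (B α R c k x * Dk v k x) * lap v x)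
        + (-(2*α*(n:ℝ)/(R*R))) * (v x * lap v x)) volume := iA1.add iA2
    have iA34 : Integrable (fun x => (-2:ℝ) * (∑ k, (Q x * B α R c k x) * (v x * Dk v k x))
        + (-(2*α*(n:ℝ)/(R*R))) * (Q x * (v x * v x))) volume := iA3.add iA4
    rw [hpt, integral_add iA12 iA34, integral_add iA1 iA2, integral_add iA3 iA4,
      integral_const_mul, integral_const_mul, integral_const_mul, integral_const_mul]
    rw [integral_finset_sum (f := fun k x => (B α R c k x * Dk v k x) * lap v x) _ (fun k _ => integ ((hBc k).mul (hVc k)) hlapvc hlapvcs),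
      integral_finset_sum (f := fun k x => (Q x * B α R c k x) * (v x * Dk v k x)) _ (fun k _ =>
        integ (hQc.mul (hBc k)) (hvc.mul (hVc k)) ((hVcs k).mul_left))]
    rw [hT1, hC1, hT3, ← hQV]
    ring
  have hSAint : Integrable (fun x => S x * A x) volume := integ hScont hAcont hAcs
  have hJint : Integrable (fun x => Real.exp (phi α R c x)^2 * (lap u x)^2) volume := by
    have h : (fun x => Real.exp (phi α R c x)^2 * (lap u x)^2)
        = fun x => (Real.exp (phi α R c x) * Real.exp (phi α R c x))
            * (lap u x * lap u x) := by
      funext x; ring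
    rw [h]
    exact integ (hec.mul hec) (hlapuc.mul hlapuc) hlapucs.mul_left
  have hJ2 : 2 * ((4*α/(R*R)) * Gt + (4*α/(R*R)) * QV) ≤ Jv := by
    calc 2 * ((4*α/(R*R)) * Gt + (4*α/(R*R)) * QV) = ∫ x, 2 * (S x * A x) := by
          rw [integral_const_mul, hISA]
      _ ≤ Jv := by
          rw [hJv]
          refine integral_mono (hSAint.const_mul 2) hJint ?_
          intro x
          show 2 * (S x * A x) ≤ Real.exp (phi α R c x)^2 * (lap u x)^2
          have h := hSA_pt x
          have h2 : Real.exp (phi α R c x)^2 * (lap u x)^2 = (S x + A x)^2 := by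
            rw [← h]; ring
          rw [h2]
          nlinarith [sq_nonneg (S x - A x)]
  have hJ3 : (8*α/(R*R)) * Gt + (32*α^3/((R*R)*(R*R))) * W ≤ Jv := by
    have he : 2 * ((4*α/(R*R)) * Gt + (4*α/(R*R)) * QV)
        = (8*α/(R*R)) * Gt + (32*α^3/((R*R)*(R*R))) * W := by
      rw [hQV_eq]
      field_simp
      ring
    linarith [hJ2, he.symm.le, he.le]
  -- conversions back to u
  have hEu : ∫ x, Real.exp (phi α R c x)^2 * (u x)^2 = ∫ x, v x * v x := by
    congr 1
    funext x
    simp only [hvdef, vE]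
    ring
  have hWl : ∫ x, v x * v x ≤ W := by
    rw [hW]
    refine integral_mono (integ hvc hvc hvcs)
      (integ (hwfc.norm.pow 2) (hvc.mul hvc) hvcs.mul_left) ?_
    intro x
    show v x * v x ≤ ‖wf R c x‖^2 * (v x * v x)
    by_cases h : u x = 0
    · have hv0 : v x = 0 := by simp [hvdef, vE, h]
      simp [hv0]
    · have h1 : (1:ℝ) ≤ ‖wf R c x‖^2 := hloc x h
      nlinarith [mul_self_nonneg (v x)]
  have hb1 : (8*α/(R*R)) * Gt ≤ Jv := by
    have : 0 ≤ (32*α^3/((R*R)*(R*R))) * W := mul_nonneg (by positivity) hW_nonneg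
    linarith
  have hb2 : (32*α^3/((R*R)*(R*R))) * W ≤ Jv := by
    have : 0 ≤ (8*α/(R*R)) * Gt := mul_nonneg (by positivity) hGt_nonneg
    linarith
  constructor
  · -- first inequality
    have e : α^3/R^4 = (1/32)*(32*α^3/((R*R)*(R*R))) := by
      field_simp
    calc α^3/R^4 * ∫ x, Real.exp (phi α R c x)^2 * (u x)^2
        ≤ α^3/R^4 * W := by
          refine mul_le_mul_of_nonneg_left ?_ (by positivity)
          rw [hEu]
          exact hWl
      _ = (1/32)*((32*α^3/((R*R)*(R*R))) * W) := by rw [e]; ring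
      _ ≤ (1/32)*Jv := by linarith [hb2]
  · -- second inequality
    have hgrad : ∫ x, Real.exp (phi α R c x)^2 * (∑ k, (Dk u k x)^2)
        ≤ 2*Gt + 2*QV := by
      have hptg : ∀ x, Real.exp (phi α R c x)^2 * (∑ k, (Dk u k x)^2)
          ≤ (∑ k, 2 * (Dk v k x * Dk v k x)) + 2 * (Q x * (v x * v x)) := by
        intro x
        have hk : ∀ k : Fin n, Real.exp (phi α R c x)^2 * (Dk u k x)^2
            ≤ 2 * (Dk v k x * Dk v k x) + 2 * ((B α R c k x)^2 * (v x * v x)) := by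
          intro k
          have e4 : Dk v k x = B α R c k x * v x + Real.exp (phi α R c x) * Dk u k x := by
            simp only [hvdef]
            exact Dk_vE α R c hu k x
          have h5 : Real.exp (phi α R c x)^2 * (Dk u k x)^2
              = (Dk v k x - B α R c k x * v x)^2 := by
            rw [e4]; ring
          rw [h5]
          nlinarith [sq_nonneg (Dk v k x + B α R c k x * v x)]
        calc Real.exp (phi α R c x)^2 * (∑ k, (Dk u k x)^2)
            = ∑ k, Real.exp (phi α R c x)^2 * (Dk u k x)^2 := Finset.mul_sum _ _ _
          _ ≤ ∑ k, (2 * (Dk v k x * Dk v k x) + 2 * ((B α R c k x)^2 * (v x * v x))) :=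
              Finset.sum_le_sum fun k _ => hk k
          _ = (∑ k, 2 * (Dk v k x * Dk v k x)) + 2 * (Q x * (v x * v x)) := by
              rw [Finset.sum_add_distrib]
              congr 1
              simp only [hQdef]
              rw [Finset.sum_mul, Finset.mul_sum]
      have iL : Integrable (fun x => Real.exp (phi α R c x)^2
          * (∑ k, (Dk u k x)^2)) volume := by
        refine integ (hec.pow 2) ?_ ?_
        · exact continuous_finset_sum _ fun k _ =>
            ((contDiff_Dk hu k).continuous).pow 2
        · refine hcs_sum Finset.univ _ fun k _ => ?_
          exact (hcs_Dk hcs k).comp_left (g := fun t : ℝ => t^2) (by norm_num)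
      have iR1 : Integrable (fun x => ∑ k, 2 * (Dk v k x * Dk v k x)) volume :=
        integrable_finset_sum _ fun k _ => (integ (hVc k) (hVc k) (hVcs k)).const_mul 2
      have iR : Integrable (fun x => (∑ k, 2 * (Dk v k x * Dk v k x))
          + 2 * (Q x * (v x * v x))) volume := iR1.add (iT4.const_mul 2)
      calc ∫ x, Real.exp (phi α R c x)^2 * (∑ k, (Dk u k x)^2)
          ≤ ∫ x, ((∑ k, 2 * (Dk v k x * Dk v k x)) + 2 * (Q x * (v x * v x))) :=
            integral_mono iL iR hptg
        _ = 2*Gt + 2*QV := by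
            rw [integral_add iR1 (iT4.const_mul 2), integral_finset_sum _
              (fun k _ => (integ (hVc k) (hVc k) (hVcs k)).const_mul 2),
              integral_const_mul, ← hQV]
            rw [Finset.sum_congr rfl fun (k : Fin n) _ =>
              integral_const_mul 2 (fun x => Dk v k x * Dk v k x), ← Finset.mul_sum, ← hGt]
      -- end of calc
    have e2 : α/R^2 * (2*Gt + 2*QV)
        = (1/4)*((8*α/(R*R))*Gt) + (1/4)*((32*α^3/((R*R)*(R*R)))*W) := by
      rw [hQV_eq]
      field_simp
      ring
    calc α/R^2 * ∫ x, Real.exp (phi α R c x)^2 * (∑ k, (Dk u k x)^2)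
        ≤ α/R^2 * (2*Gt + 2*QV) := by
          refine mul_le_mul_of_nonneg_left hgrad (by positivity)
      _ = (1/4)*((8*α/(R*R))*Gt) + (1/4)*((32*α^3/((R*R)*(R*R)))*W) := e2
      _ ≤ (1/4)*Jv + (1/4)*Jv := add_le_add (by linarith [hb1]) (by linarith [hb2])
      _ = (1/2)*Jv := by ring

end MainReal

end CL

open CL

/-- **Carleman inequality for the Laplacian in `ℝ^d`** (dimension `d+1 ≥ 1`).
There is `c = c(d) > 0` such that for all `α > 0`, `R > 0` and every `g ∈ H²(ℝ^d)` with
compact support contained in `{x : |x/R + 3e₁|² ≥ 1}`,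
`(α^{3/2}/R²)‖e^{α|x/R+3e₁|²} g‖₂ + (α^{1/2}/R)‖e^{α|x/R+3e₁|²} ∇g‖₂
  ≤ c ‖e^{α|x/R+3e₁|²} Δg‖₂`. -/
theorem carleman_continuous_laplacian (d : ℕ) :
    ∃ c : ℝ, 0 < c ∧
      ∀ α R : ℝ, 0 < α → 0 < R →
        ∀ g : EuclideanSpace ℝ (Fin (d + 1)) → ℂ,
          ContDiff ℝ 2 g → HasCompactSupport g →
          (∀ x, g x ≠ 0 →
            1 ≤ ‖R⁻¹ • x + (3 : ℝ) • (EuclideanSpace.single 0 1 :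
              EuclideanSpace ℝ (Fin (d + 1)))‖ ^ 2) →
          α ^ ((3 : ℝ) / 2) / R ^ 2 *
              Real.sqrt (∫ x : EuclideanSpace ℝ (Fin (d + 1)),
                Real.exp (α * ‖R⁻¹ • x + (3 : ℝ) • (EuclideanSpace.single 0 1 :
                    EuclideanSpace ℝ (Fin (d + 1)))‖ ^ 2) ^ 2 * ‖g x‖ ^ 2) +
            α ^ ((1 : ℝ) / 2) / R *
              Real.sqrt (∫ x : EuclideanSpace ℝ (Fin (d + 1)),
                Real.exp (α * ‖R⁻¹ • x + (3 : ℝ) • (EuclideanSpace.single 0 1 :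
                    EuclideanSpace ℝ (Fin (d + 1)))‖ ^ 2) ^ 2 * ‖fderiv ℝ g x‖ ^ 2) ≤
          c * Real.sqrt (∫ x : EuclideanSpace ℝ (Fin (d + 1)),
                Real.exp (α * ‖R⁻¹ • x + (3 : ℝ) • (EuclideanSpace.single 0 1 :
                    EuclideanSpace ℝ (Fin (d + 1)))‖ ^ 2) ^ 2 * ‖lapR g x‖ ^ 2) := by
  refine ⟨1, one_pos, ?_⟩
  intro α R hα hR g hg hgc hloc
  set c3 : EuclideanSpace ℝ (Fin (d+1)) :=
    (3 : ℝ) • (EuclideanSpace.single 0 1 : EuclideanSpace ℝ (Fin (d+1))) with hc3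
  set I0 := ∫ x : EuclideanSpace ℝ (Fin (d + 1)),
    Real.exp (α * ‖R⁻¹ • x + c3‖ ^ 2) ^ 2 * ‖g x‖ ^ 2 with hI0def
  set I1 := ∫ x : EuclideanSpace ℝ (Fin (d + 1)),
    Real.exp (α * ‖R⁻¹ • x + c3‖ ^ 2) ^ 2 * ‖fderiv ℝ g x‖ ^ 2 with hI1def
  set Jg := ∫ x : EuclideanSpace ℝ (Fin (d + 1)),
    Real.exp (α * ‖R⁻¹ • x + c3‖ ^ 2) ^ 2 * ‖lapR g x‖ ^ 2 with hJgdef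
  set u₁ : EuclideanSpace ℝ (Fin (d+1)) → ℝ := fun x => (g x).re with hu1
  set u₂ : EuclideanSpace ℝ (Fin (d+1)) → ℝ := fun x => (g x).im with hu2
  have hu₁ : ContDiff ℝ 2 u₁ := (Complex.reCLM.contDiff).comp hg
  have hu₂ : ContDiff ℝ 2 u₂ := (Complex.imCLM.contDiff).comp hg
  have hcs₁ : HasCompactSupport u₁ := hgc.comp_left (g := fun z : ℂ => z.re) rfl
  have hcs₂ : HasCompactSupport u₂ := hgc.comp_left (g := fun z : ℂ => z.im) rfl
  have hloc₁ : ∀ x, u₁ x ≠ 0 → 1 ≤ ‖R⁻¹ • x + c3‖ ^ 2 :=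
    fun x hx => hloc x (fun h0 => hx (by simp [hu1, h0]))
  have hloc₂ : ∀ x, u₂ x ≠ 0 → 1 ≤ ‖R⁻¹ • x + c3‖ ^ 2 :=
    fun x hx => hloc x (fun h0 => hx (by simp [hu2, h0]))
  have main₁ := main_real α R hα hR c3 u₁ hu₁ hcs₁ hloc₁
  have main₂ := main_real α R hα hR c3 u₂ hu₂ hcs₂ hloc₂
  have hdg : Differentiable ℝ g := hg.differentiable two_ne_zero
  have hlap₁ : ∀ x, CL.lap u₁ x = (lapR g x).re := fun x => lap_clm Complex.reCLM hg x
  have hlap₂ : ∀ x, CL.lap u₂ x = (lapR g x).im := fun x => lap_clm Complex.imCLM hg x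
  have hz : ∀ z : ℂ, ‖z‖^2 = z.re^2 + z.im^2 := fun z => by
    rw [Complex.sq_norm, Complex.normSq_apply]; ring
  have hec : Continuous (fun x => Real.exp (phi α R c3 x)) :=
    (contDiff_expphi α R c3).continuous
  have hint : ∀ (w : EuclideanSpace ℝ (Fin (d+1)) → ℝ), Continuous w → HasCompactSupport w →
      Integrable (fun x => Real.exp (phi α R c3 x)^2 * (w x)^2) volume := by
    intro w hw hwc
    have h : (fun x => Real.exp (phi α R c3 x)^2 * (w x)^2)
        = fun x => (Real.exp (phi α R c3 x) * Real.exp (phi α R c3 x)) * (w x * w x) :=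
      funext fun x => by ring
    rw [h]
    exact integ (hec.mul hec) (hw.mul hw) hwc.mul_left
  -- split the right-hand side integral
  have hJ1int := hint (CL.lap u₁) (continuous_lap hu₁) (hcs_lap hcs₁)
  have hJ2int := hint (CL.lap u₂) (continuous_lap hu₂) (hcs_lap hcs₂)
  have hJsplit : Jg = (∫ x, Real.exp (phi α R c3 x)^2 * (CL.lap u₁ x)^2)
      + ∫ x, Real.exp (phi α R c3 x)^2 * (CL.lap u₂ x)^2 := by
    rw [← integral_add hJ1int hJ2int]
    have : Jg = ∫ x, Real.exp (phi α R c3 x)^2 * ‖lapR g x‖^2 := rfl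
    rw [this]
    congr 1
    funext x
    rw [hz (lapR g x), ← hlap₁ x, ← hlap₂ x]
    ring
  have hI0split : I0 = (∫ x, Real.exp (phi α R c3 x)^2 * (u₁ x)^2)
      + ∫ x, Real.exp (phi α R c3 x)^2 * (u₂ x)^2 := by
    rw [← integral_add (hint u₁ hu₁.continuous hcs₁) (hint u₂ hu₂.continuous hcs₂)]
    have : I0 = ∫ x, Real.exp (phi α R c3 x)^2 * ‖g x‖^2 := rfl
    rw [this]
    congr 1
    funext x
    rw [hz (g x)]
    ring
  -- gradient comparison
  have igs : ∀ (w : EuclideanSpace ℝ (Fin (d+1)) → ℝ), ContDiff ℝ 2 w → HasCompactSupport w →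
      Integrable (fun x => Real.exp (phi α R c3 x)^2 * (∑ k, (Dk w k x)^2)) volume := by
    intro w hw hwc
    refine integ (hec.pow 2) ?_ ?_
    · exact continuous_finset_sum _ fun k _ => ((contDiff_Dk hw k).continuous).pow 2
    · exact hcs_sum Finset.univ _ fun k _ =>
        (hcs_Dk hwc k).comp_left (g := fun t : ℝ => t^2) (by norm_num)
  have hgradsplit : I1 ≤ (∫ x, Real.exp (phi α R c3 x)^2 * (∑ k, (Dk u₁ k x)^2))
      + ∫ x, Real.exp (phi α R c3 x)^2 * (∑ k, (Dk u₂ k x)^2) := by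
    rw [← integral_add (igs u₁ hu₁ hcs₁) (igs u₂ hu₂ hcs₂)]
    have h0 : I1 = ∫ x, Real.exp (phi α R c3 x)^2 * ‖fderiv ℝ g x‖^2 := rfl
    rw [h0]
    have iLHS : Integrable (fun x => Real.exp (phi α R c3 x)^2 * ‖fderiv ℝ g x‖^2) volume := by
      refine integ (hec.pow 2) ?_ ?_
      · exact ((hg.fderiv_right (m := 1) (by norm_num)).continuous.norm).pow 2
      · exact (hgc.fderiv ℝ).comp_left
          (g := fun T : EuclideanSpace ℝ (Fin (d+1)) →L[ℝ] ℂ => ‖T‖^2) (by simp)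
    refine integral_mono iLHS ((igs u₁ hu₁ hcs₁).add (igs u₂ hu₂ hcs₂)) fun x => ?_
    have hT := opnorm_sq_le (fderiv ℝ g x)
    have hk : ∀ k : Fin (d+1), ‖fderiv ℝ g x (ek (d+1) k)‖^2
        = (Dk u₁ k x)^2 + (Dk u₂ k x)^2 := by
      intro k
      have h1 : Dk u₁ k x = (fderiv ℝ g x (ek (d+1) k)).re := Dk_clm Complex.reCLM (hdg x) k
      have h2 : Dk u₂ k x = (fderiv ℝ g x (ek (d+1) k)).im := Dk_clm Complex.imCLM (hdg x) k
      rw [hz (fderiv ℝ g x (ek (d+1) k)), h1, h2]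
    calc Real.exp (phi α R c3 x)^2 * ‖fderiv ℝ g x‖^2
        ≤ Real.exp (phi α R c3 x)^2 * ∑ k, ‖fderiv ℝ g x (ek (d+1) k)‖^2 :=
          mul_le_mul_of_nonneg_left hT (sq_nonneg _)
      _ = Real.exp (phi α R c3 x)^2 * (∑ k, (Dk u₁ k x)^2)
          + Real.exp (phi α R c3 x)^2 * (∑ k, (Dk u₂ k x)^2) := by
          rw [Finset.sum_congr rfl fun k _ => hk k, Finset.sum_add_distrib]
          ring
  -- numeric bounds
  have hJgnn : 0 ≤ Jg := integral_nonneg fun x => by positivity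
  have hI0nn : 0 ≤ I0 := integral_nonneg fun x => by positivity
  have hI1nn : 0 ≤ I1 := integral_nonneg fun x => by positivity
  have key1 : α^3/R^4 * I0 ≤ (1/32) * Jg := by
    rw [hI0split, hJsplit]
    have h1 := main₁.1
    have h2 := main₂.1
    ring_nf
    ring_nf at h1 h2
    linarith
  have key2 : α/R^2 * I1 ≤ (1/2) * Jg := by
    have h3 : α/R^2 * I1 ≤ α/R^2 * ((∫ x, Real.exp (phi α R c3 x)^2 * (∑ k, (Dk u₁ k x)^2))
        + ∫ x, Real.exp (phi α R c3 x)^2 * (∑ k, (Dk u₂ k x)^2)) :=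
      mul_le_mul_of_nonneg_left hgradsplit (by positivity)
    have h1 := main₁.2
    have h2 := main₂.2
    rw [hJsplit]
    ring_nf
    ring_nf at h1 h2 h3
    linarith
  -- square roots
  have t1 : α ^ ((3:ℝ)/2) / R ^ 2 * Real.sqrt I0 ≤ Real.sqrt ((1/32) * Jg) := by
    have hx : 0 ≤ α ^ ((3:ℝ)/2) / R ^ 2 * Real.sqrt I0 := by positivity
    refine (Real.le_sqrt hx (by linarith)).mpr ?_
    have hr : (α^((3:ℝ)/2))^2 = α^3 := by
      rw [← Real.rpow_natCast (α^((3:ℝ)/2)) 2, ← Real.rpow_mul hα.le,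
        show (3:ℝ)/2 * ((2:ℕ):ℝ) = ((3:ℕ):ℝ) by norm_num, Real.rpow_natCast]
    calc (α ^ ((3:ℝ)/2) / R ^ 2 * Real.sqrt I0)^2
        = (α^((3:ℝ)/2))^2/R^4 * (Real.sqrt I0)^2 := by ring
      _ = α^3/R^4 * I0 := by rw [hr, Real.sq_sqrt hI0nn]
      _ ≤ (1/32) * Jg := key1
  have t2 : α ^ ((1:ℝ)/2) / R * Real.sqrt I1 ≤ Real.sqrt ((1/2) * Jg) := by
    have hx : 0 ≤ α ^ ((1:ℝ)/2) / R * Real.sqrt I1 := by positivity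
    refine (Real.le_sqrt hx (by linarith)).mpr ?_
    have hr : (α^((1:ℝ)/2))^2 = α := by
      rw [← Real.rpow_natCast (α^((1:ℝ)/2)) 2, ← Real.rpow_mul hα.le,
        show (1:ℝ)/2 * ((2:ℕ):ℝ) = ((1:ℕ):ℝ) by norm_num, Real.rpow_natCast, pow_one]
    calc (α ^ ((1:ℝ)/2) / R * Real.sqrt I1)^2
        = (α^((1:ℝ)/2))^2/R^2 * (Real.sqrt I1)^2 := by ring
      _ = α/R^2 * I1 := by rw [hr, Real.sq_sqrt hI1nn]
      _ ≤ (1/2) * Jg := key2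
  have s1 : Real.sqrt ((1/32) * Jg) ≤ (1/4) * Real.sqrt Jg := by
    rw [Real.sqrt_mul (by norm_num) Jg]
    refine mul_le_mul_of_nonneg_right ?_ (Real.sqrt_nonneg Jg)
    have h4 : (1/4:ℝ) = Real.sqrt (1/16) := by
      rw [show (1/16:ℝ) = (1/4)^2 by norm_num, Real.sqrt_sq (by norm_num)]
    rw [h4]
    exact Real.sqrt_le_sqrt (by norm_num)
  have s2 : Real.sqrt ((1/2) * Jg) ≤ (3/4) * Real.sqrt Jg := by
    rw [Real.sqrt_mul (by norm_num) Jg]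
    refine mul_le_mul_of_nonneg_right ?_ (Real.sqrt_nonneg Jg)
    have h4 : (3/4:ℝ) = Real.sqrt (9/16) := by
      rw [show (9/16:ℝ) = (3/4)^2 by norm_num, Real.sqrt_sq (by norm_num)]
    rw [h4]
    exact Real.sqrt_le_sqrt (by norm_num)
  calc α ^ ((3:ℝ)/2) / R ^ 2 * Real.sqrt I0 + α ^ ((1:ℝ)/2) / R * Real.sqrt I1
      ≤ (1/4) * Real.sqrt Jg + (3/4) * Real.sqrt Jg :=
        add_le_add (t1.trans s1) (t2.trans s2)
    _ = 1 * Real.sqrt Jg := by ring
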